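/- Empirical-quantile upper confidence bound: let Y_1,…,Y_t be i.i.d. real random variables, let p ∈ (0,1) with Pr(Y_1 ≤ G_p) = p where G_p is the p-quantile of Y_1, let δ ∈ (0,1), and set u_t = √(2p(1−p)·ln(1/δ)/t) + ln(1/δ)/(3t). Let β = p − 2·u_t − (3/(2t))·ln(1/δ) and assume β > 0, and let G_β = inf{x : Pr(Y_1 ≤ x) ≥ β} be the β-quantile. Then with probability at least 1 − δ, the empirical quantile satisfies G_β ≤ q̂_t(p − u_t), where q̂_t(α) = inf{x ∈ ℝ : #{s ≤ t : Y_s ≤ x} ≥ α·t}. -/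

import Mathlib

open MeasureTheory ProbabilityTheory

lemma log_lower_bound {y : ℝ} (hy : 1 ≤ y) : 2*(y-1)/(y+1) ≤ Real.log y := by
  have key : MonotoneOn (fun y : ℝ => Real.log y + 4/(y+1)) (Set.Ici 1) := by
    have hder : ∀ z ∈ interior (Set.Ici (1:ℝ)),
        HasDerivAt (fun y : ℝ => Real.log y + 4/(y+1)) (1/z + 4*(-1/(z+1)^2)) z := by
      intro z hz
      rw [interior_Ici] at hz
      have hz1 : (1:ℝ) < z := hz
      have h1 : HasDerivAt (fun y : ℝ => Real.log y) (1/z) z := by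
        simpa using Real.hasDerivAt_log (by linarith)
      have h2 : HasDerivAt (fun y : ℝ => (y+1)) 1 z := (hasDerivAt_id z).add_const 1
      have h3 : HasDerivAt (fun y : ℝ => (y+1)⁻¹) (-1/(z+1)^2) z := by
        exact (by simpa using h2.inv (by linarith) : HasDerivAt (fun y : ℝ => y+1)⁻¹ (-1/(z+1)^2) z)
      have h4 : HasDerivAt (fun y : ℝ => 4/(y+1)) (4*(-1/(z+1)^2)) z := by
        simpa [div_eq_mul_inv] using h3.const_mul 4
      exact h1.add h4
    apply monotoneOn_of_deriv_nonneg (convex_Ici 1)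
    · apply ContinuousOn.add
      · exact Real.continuousOn_log.mono (by intro z hz; simp at hz ⊢; linarith)
      · apply ContinuousOn.div continuousOn_const (by fun_prop)
        intro z hz; simp at hz; intro h; linarith
    · intro z hz
      exact (hder z hz).differentiableAt.differentiableWithinAt
    · intro z hz
      rw [(hder z hz).deriv]
      rw [interior_Ici] at hz
      have hz1 : (1:ℝ) < z := hz
      have e : 1/z + 4*(-1/(z+1)^2) = (z-1)^2/(z*(z+1)^2) := by
        field_simp; ring
      rw [e]
      have : (0:ℝ) < z := by linarith
      positivity
  have h := key (Set.self_mem_Ici) (Set.mem_Ici.2 hy) hy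
  simp only [Real.log_one] at h
  have hy1 : (0:ℝ) < y + 1 := by linarith
  rw [div_le_iff₀ hy1]
  have h6 : (2 - 4/(y+1))*(y+1) = 2*(y-1) := by field_simp; ring
  have h7 : 2 - 4/(y+1) ≤ Real.log y := by
    have : (4:ℝ)/(1+1) = 2 := by norm_num
    rw [this] at h; linarith
  nlinarith [mul_le_mul_of_nonneg_right h7 hy1.le]

lemma log_upper_bound {y : ℝ} (hy : 1 ≤ y) : Real.log y ≤ (y-1)/Real.sqrt y := by
  have key : MonotoneOn (fun y : ℝ => Real.sqrt y - (Real.sqrt y)⁻¹ - Real.log y) (Set.Ici 1) := by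
    have hder : ∀ z ∈ interior (Set.Ici (1:ℝ)),
        HasDerivAt (fun y : ℝ => Real.sqrt y - (Real.sqrt y)⁻¹ - Real.log y)
          (1/(2*Real.sqrt z) - (-(1/(2*Real.sqrt z))/(Real.sqrt z)^2) - 1/z) z := by
      intro z hz
      rw [interior_Ici] at hz
      have hz1 : (1:ℝ) < z := hz
      have hs : Real.sqrt z ≠ 0 := by positivity
      have h1 : HasDerivAt Real.sqrt (1/(2*Real.sqrt z)) z := Real.hasDerivAt_sqrt (by linarith)
      have h2 : HasDerivAt (fun y : ℝ => (Real.sqrt y)⁻¹) (-(1/(2*Real.sqrt z))/(Real.sqrt z)^2) z :=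
        h1.inv hs
      have h3 : HasDerivAt (fun y : ℝ => Real.log y) (1/z) z := by
        simpa using Real.hasDerivAt_log (by linarith)
      exact (h1.sub h2).sub h3
    apply monotoneOn_of_deriv_nonneg (convex_Ici 1)
    · apply ContinuousOn.sub
      apply ContinuousOn.sub
      · exact Real.continuous_sqrt.continuousOn
      · apply ContinuousOn.inv₀ Real.continuous_sqrt.continuousOn
        intro z hz; simp at hz; positivity
      · exact Real.continuousOn_log.mono (by intro z hz; simp at hz ⊢; linarith)
    · intro z hz
      exact (hder z hz).differentiableAt.differentiableWithinAt
    · intro z hz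
      rw [(hder z hz).deriv]
      rw [interior_Ici] at hz
      have hz1 : (1:ℝ) < z := hz
      have hz0 : (0:ℝ) < z := by linarith
      set s := Real.sqrt z with hs
      have hs0 : 0 < s := Real.sqrt_pos.2 hz0
      have hsq : s^2 = z := Real.sq_sqrt hz0.le
      rw [← hsq]
      have e : 1/(2*s) - (-(1/(2*s))/s^2) - 1/s^2 = (s-1)^2/(2*s^3) := by
        field_simp; ring
      rw [e]
      positivity
  have h := key (Set.self_mem_Ici) (Set.mem_Ici.2 hy) hy
  have hy0 : (0:ℝ) < y := by linarith
  set s := Real.sqrt y with hs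
  have hs0 : 0 < s := Real.sqrt_pos.2 hy0
  have hsq : s^2 = y := Real.sq_sqrt hy0.le
  simp only [Real.sqrt_one, Real.log_one, inv_one] at h
  have h2 : (y-1)/s = s - s⁻¹ := by
    rw [← hsq]; field_simp
  rw [h2]
  linarith [h]

set_option maxHeartbeats 2000000 in
 
lemma core_poly {p r A β x w : ℝ} (hp0 : 0 ≤ p) (hp1 : p ≤ 1) (hr : 0 ≤ r) (hA0 : 0 ≤ A)
    (hA2 : A^2 = 2*p*(1-p)*r) (hβ : β = p - 2*A - 13/6*r) (hx : x = p - A - r/3)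
    (hw : w = A + 11/6*r) :
    w*(((1-x) + w/2)^2 + (1-x)*(1-β))*(x+β) ≤ 2*((1-x)+w/2)*(1-β)*(2*x*w - r*(x+β)) := by
  subst hβ hx hw
  have hp' : 0 ≤ 1 - p := by linarith
  have hC3 : 0 ≤ 211/18 + 184/3*p - 137/2*p^2 - 3*p^3 := by
    nlinarith [mul_nonneg hp0 hp', mul_nonneg (mul_nonneg hp0 hp0) hp']
  have hC2 : 0 ≤ 1709/54 + 38881/432*p - 121*p^2 := by nlinarith [mul_nonneg hp0 hp']
  have hQ1 : 0 ≤ 40/3 - 12*p - p^2 := by nlinarith [mul_nonneg hp0 hp']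
  have hQ2 : 0 ≤ 202/3 - 493/24*p - 91/2*p^2 := by nlinarith [mul_nonneg hp0 hp']
  rw [← sub_nonneg]
  have hzero : A^2 - 2*p*(1-p)*r = 0 := by rw [hA2]; ring
  have hid : 2*((1-(p-A-r/3))+(A+11/6*r)/2)*(1-(p-2*A-13/6*r))*(2*(p-A-r/3)*(A+11/6*r) - r*((p-A-r/3)+(p-2*A-13/6*r))) - (A+11/6*r)*(((1-(p-A-r/3)) + (A+11/6*r)/2)^2 + (1-(p-A-r/3))*(1-(p-2*A-13/6*r)))*((p-A-r/3)+(p-2*A-13/6*r))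
      = r^2*((1-p)*(211/18 + 184/3*p - 137/2*p^2 - 3*p^3)) + r^3*(1709/54 + 38881/432*p - 121*p^2) + 30055/1728*r^4
        + A*(r*((1-p)*(40/3 - 12*p - p^2)) + r^2*(202/3 - 493/24*p - 91/2*p^2) + 8053/144*r^3)
        + (A^2 - 2*p*(1-p)*r)*((2) + (4)*A + (3/4)*A^2 + (40)*r + (91/4)*r*A + (121/2)*r^2 + (-2)*p + (-1/2)*p*A + (-137/4)*p*r + (-3/2)*p^2*r) := by
    ring
  rw [hid, hzero, zero_mul, add_zero]
  have t1 : 0 ≤ r^2*((1-p)*(211/18 + 184/3*p - 137/2*p^2 - 3*p^3)) :=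
    mul_nonneg (sq_nonneg r) (mul_nonneg hp' hC3)
  have t2 : 0 ≤ r^3*(1709/54 + 38881/432*p - 121*p^2) := mul_nonneg (by positivity) hC2
  have t3 : 0 ≤ A*(r*((1-p)*(40/3 - 12*p - p^2)) + r^2*(202/3 - 493/24*p - 91/2*p^2) + 8053/144*r^3) := by
    have := mul_nonneg hr (mul_nonneg hp' hQ1)
    have := mul_nonneg (sq_nonneg r) hQ2
    have h3 : (0:ℝ) ≤ 8053/144*r^3 := by positivity
    exact mul_nonneg hA0 (by nlinarith [sq_nonneg r])
  nlinarith [sq_nonneg (r^2)]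

/-- Empirical quantile of the samples `y 0, …, y (t-1)` at level `α`:
`q̂_t(α) = inf {x : #{s ≤ t : y s ≤ x} ≥ α t}`. -/
noncomputable def empQuantile (t : ℕ) (y : ℕ → ℝ) (α : ℝ) : ℝ :=
  sInf {x : ℝ | α * t ≤ (((Finset.range t).filter fun s => y s ≤ x).card : ℝ)}

set_option maxHeartbeats 1000000 in
/-- The key analytic inequality: KL(x‖β) ≥ r. -/
lemma kl_bound {p r A β x : ℝ} (hp0 : 0 < p) (hp1 : p < 1) (hr : 0 < r) (hA0 : 0 ≤ A)
    (hA2 : A^2 = 2*p*(1-p)*r) (hβdef : β = p - 2*A - 13/6*r) (hβpos : 0 < β)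
    (hxdef : x = p - A - r/3) :
    r ≤ x * Real.log (x/β) - (1-x) * Real.log ((1-β)/(1-x)) := by
  set w : ℝ := A + 11/6*r with hw
  have hw0 : 0 < w := by positivity
  have hβx : β + w = x := by rw [hβdef, hxdef, hw]; ring
  have hx0 : 0 < x := by linarith
  have hx1 : x < 1 := by rw [hxdef]; nlinarith
  have hm : 0 < 1 - x := by linarith
  have hn : 0 < 1 - β := by linarith
  set m : ℝ := 1 - x with hmdef
  set n : ℝ := 1 - β with hndef
  set c : ℝ := m + w/2 with hcdef
  have hc : 0 < c := by positivity
  -- lower bound for x * log (x/β)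
  have hy1 : 1 ≤ x/β := by rw [le_div_iff₀ hβpos]; linarith
  have hlog1 : 2*(x-β)/(x+β) ≤ Real.log (x/β) := by
    have h := log_lower_bound hy1
    have e : 2*(x/β-1)/(x/β+1) = 2*(x-β)/(x+β) := by
      rw [div_eq_div_iff (by positivity) (by positivity)]
      field_simp
    rwa [e] at h
  have hB1 : 2*x*(x-β)/(x+β) ≤ x * Real.log (x/β) := by
    have := mul_le_mul_of_nonneg_left hlog1 hx0.le
    calc 2*x*(x-β)/(x+β) = x * (2*(x-β)/(x+β)) := by ring
    _ ≤ x * Real.log (x/β) := this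
  -- upper bound for (1-x) * log ((1-β)/(1-x))
  have hy2 : 1 ≤ n/m := by rw [le_div_iff₀ hm]; simp only [hndef, hmdef]; linarith
  have hlog2 : Real.log (n/m) ≤ (n/m - 1)/Real.sqrt (n/m) := log_upper_bound hy2
  have hsqrtnm : Real.sqrt (n/m) = Real.sqrt (m*n) / m := by
    rw [show n/m = (m*n)/m^2 by field_simp, Real.sqrt_div (by positivity) _,
      Real.sqrt_sq hm.le]
  have hsq_pos : 0 < Real.sqrt (m*n) := Real.sqrt_pos.2 (by positivity)
  have hAMGM : 2*c*Real.sqrt (m*n) ≤ c^2 + m*n := by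
    nlinarith [sq_nonneg (Real.sqrt (m*n) - c), Real.sq_sqrt (mul_nonneg hm.le hn.le)]
  have hB2 : (1-x) * Real.log ((1-β)/(1-x)) ≤ w * ((c^2 + m*n)/(2*c*n)) := by
    have h1 : (1-x) * Real.log ((1-β)/(1-x)) = m * Real.log (n/m) := by rw [hmdef, hndef]
    rw [h1]
    have h2 : m * Real.log (n/m) ≤ m * ((n/m - 1)/Real.sqrt (n/m)) :=
      mul_le_mul_of_nonneg_left hlog2 hm.le
    have hnm : n - m = w := by rw [hndef, hmdef]; linarith
    have h3 : m * ((n/m - 1)/Real.sqrt (n/m)) = w * (m / Real.sqrt (m*n)) := by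
      rw [hsqrtnm, ← hnm]
      field_simp
    have h4 : w * (m / Real.sqrt (m*n)) ≤ w * ((c^2 + m*n)/(2*c*n)) := by
      apply mul_le_mul_of_nonneg_left _ hw0.le
      rw [div_le_div_iff₀ hsq_pos (by positivity)]
      calc m * (2*c*n) = (2*c) * (m*n) := by ring
      _ = (2*c) * (Real.sqrt (m*n))^2 := by rw [Real.sq_sqrt (by positivity)]
      _ = ((2*c) * Real.sqrt (m*n)) * Real.sqrt (m*n) := by ring
      _ ≤ ((c^2 + m*n)) * Real.sqrt (m*n) := by
          apply mul_le_mul_of_nonneg_right _ hsq_pos.le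
          exact hAMGM
    linarith
  -- core polynomial inequality
  have hcore := core_poly hp0.le hp1.le hr.le hA0 hA2 hβdef hxdef hw.symm
  have hxw : x - β = w := by linarith
  have hDpos : 0 < (x+β) * (2*c*n) := by positivity
  have hfrac : r ≤ 2*x*w/(x+β) - w * ((c^2 + m*n)/(2*c*n)) := by
    have hcore' : w*((m + w/2)^2 + m*n)*(x+β) ≤ 2*(m+w/2)*n*(2*x*w - r*(x+β)) := by
      rw [hmdef, hndef]; exact hcore
    have hnum : 0 ≤ 2*x*w*(2*c*n) - w*(c^2+m*n)*(x+β) - r*(x+β)*(2*c*n) := by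
      rw [hcdef]
      linarith [hcore']
    have := div_nonneg hnum hDpos.le
    have heq : (2*x*w*(2*c*n) - w*(c^2+m*n)*(x+β) - r*(x+β)*(2*c*n)) / ((x+β) * (2*c*n))
        = 2*x*w/(x+β) - w*((c^2+m*n)/(2*c*n)) - r := by
      field_simp
    rw [heq] at this
    linarith
  rw [hxw] at hB1
  have h1' : (1-x) * Real.log ((1-β)/(1-x)) = m * Real.log (n/m) := by rw [hmdef, hndef]
  linarith [hB1, hB2, hfrac, h1']


set_option maxHeartbeats 2000000 in
/-- upper confidence bound for the empirical quantile.  If `Y 0,…,Y (t-1)`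
are i.i.d. with `Pr(Y ≤ G_p) = p` where `G_p` is the `p`-quantile,
`u_t = √(2p(1-p)ln(1/δ)/t) + ln(1/δ)/(3t)`, and `β = p - 2u_t - (3/(2t))ln(1/δ) > 0`
with `β`-quantile `G_β`, then with probability at least `1-δ` we have
`G_β ≤ q̂_t(p - u_t)`. -/
theorem empirical_quantile_upper_confidence
    {Ω : Type*} [MeasurableSpace Ω] (μ : Measure Ω) [IsProbabilityMeasure μ]
    (t : ℕ) (ht : 1 ≤ t)
    (Y : ℕ → Ω → ℝ) (hmeas : ∀ s < t, Measurable (Y s))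
    (hiid : iIndepFun (fun s : Fin t => Y s) μ)
    (hident : ∀ s < t, Measure.map (Y s) μ = Measure.map (Y 0) μ)
    (p : ℝ) (hp : p ∈ Set.Ioo (0 : ℝ) 1)
    (Gp : ℝ) (hGp : Gp = sInf {x : ℝ | p ≤ (μ {ω | Y 0 ω ≤ x}).toReal})
    (hnoatom : (μ {ω | Y 0 ω ≤ Gp}).toReal = p)
    (δ : ℝ) (hδ : δ ∈ Set.Ioo (0 : ℝ) 1)
    (u : ℝ)
    (hu : u = Real.sqrt (2 * p * (1 - p) * Real.log (1 / δ) / t)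
      + Real.log (1 / δ) / (3 * t))
    (β : ℝ) (hβ : β = p - 2 * u - 3 / (2 * t) * Real.log (1 / δ)) (hβpos : 0 < β)
    (Gβ : ℝ) (hGβ : Gβ = sInf {x : ℝ | β ≤ (μ {ω | Y 0 ω ≤ x}).toReal}) :
    ENNReal.ofReal (1 - δ) ≤ μ {ω | Gβ ≤ empQuantile t (fun s => Y s ω) (p - u)} := by
  classical
  obtain ⟨hδ0, hδ1⟩ := hδ
  obtain ⟨hp0, hp1⟩ := hp
  have ht0 : (0:ℝ) < (t:ℝ) := by exact_mod_cast Nat.pos_of_ne_zero (by omega)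
  set L : ℝ := Real.log (1/δ) with hLdef
  have hL : 0 < L := Real.log_pos (by rw [lt_div_iff₀ hδ0]; linarith)
  set r : ℝ := L / t with hrdef
  have hr : 0 < r := div_pos hL ht0
  set A : ℝ := Real.sqrt (2 * p * (1 - p) * L / t) with hAdef
  have hA0 : 0 ≤ A := Real.sqrt_nonneg _
  have ht0' : (t:ℝ) ≠ 0 := ne_of_gt ht0
  have hA2 : A^2 = 2*p*(1-p)*r := by
    rw [hAdef, Real.sq_sqrt (by
      apply div_nonneg _ ht0.le
      nlinarith [mul_pos (mul_pos hp0 (by linarith : (0:ℝ) < 1 - p)) hL]), hrdef]; ring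
  have hu' : u = A + r/3 := by rw [hu, hrdef, hAdef]; ring
  have hβ' : β = p - 2*A - 13/6*r := by
    rw [hβ, hu', hrdef]
    field_simp
    ring
  set x : ℝ := p - u with hxdef
  have hx' : x = p - A - r/3 := by rw [hxdef, hu']; ring
  have hβx : β + (A + 11/6*r) = x := by rw [hβ', hx']; ring
  have hx0 : 0 < x := by linarith [hβx]
  have hx1 : x < 1 := by rw [hx']; linarith
  have hβ1 : β < 1 := by linarith [hβx, hx1]
  have hβltx : β < x := by linarith [hβx]
  -- the KL bound
  have hKL : r ≤ x * Real.log (x/β) - (1-x) * Real.log ((1-β)/(1-x)) :=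
    kl_bound hp0 hp1 hr hA0 hA2 hβ' hβpos hx'
  have hm0 : 0 < 1 - x := by linarith
  have hn0 : 0 < 1 - β := by linarith
  have hY0meas : Measurable (Y 0) := hmeas 0 (by omega)
  -- the Bernoulli indicator variables
  set Xb : Fin t → Ω → ℝ :=
    fun i => (fun v : ℝ => if v < Gβ then (1:ℝ) else 0) ∘ (Y (i : ℕ)) with hXb
  have hXmeas : ∀ i : Fin t, Measurable (Xb i) := fun i =>
    (Measurable.ite measurableSet_Iio measurable_const measurable_const).comp (hmeas i i.isLt)
  have hXindep : iIndepFun Xb μ :=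
    hiid.comp (fun _ v => if v < Gβ then (1:ℝ) else 0)
      (fun _ => Measurable.ite measurableSet_Iio measurable_const measurable_const)
  set q : ℝ := (μ {ω | Y 0 ω < Gβ}).toReal with hqdef
  have hqi : ∀ i : Fin t, μ {ω | Y (i:ℕ) ω < Gβ} = μ {ω | Y 0 ω < Gβ} := by
    intro i
    have h1 : {ω | Y (i:ℕ) ω < Gβ} = (Y (i:ℕ)) ⁻¹' (Set.Iio Gβ) := rfl
    have h2 : {ω | Y 0 ω < Gβ} = (Y 0) ⁻¹' (Set.Iio Gβ) := rfl
    rw [h1, h2, ← Measure.map_apply (hmeas i i.isLt) measurableSet_Iio,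
      ← Measure.map_apply hY0meas measurableSet_Iio, hident i i.isLt]
  -- q ≤ β
  have hinter : ⋂ n : ℕ, {ω | Y 0 ω ≤ -(n:ℝ)} = ∅ := by
    ext ω
    simp only [Set.mem_iInter, Set.mem_setOf_eq, Set.mem_empty_iff_false, iff_false, not_forall]
    obtain ⟨n, hn⟩ := exists_nat_gt (-(Y 0 ω))
    exact ⟨n, by push_neg; linarith⟩
  have htendz : Filter.Tendsto (fun n : ℕ => μ {ω | Y 0 ω ≤ -(n:ℝ)}) Filter.atTop (nhds 0) := by
    have h := tendsto_measure_iInter_atTop (μ := μ) (s := fun n : ℕ => {ω | Y 0 ω ≤ -(n:ℝ)})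
      (fun n => (hY0meas measurableSet_Iic).nullMeasurableSet)
      (fun a b hab ω hω => by
        simp only [Set.mem_setOf_eq] at hω ⊢
        have : (a:ℝ) ≤ b := Nat.cast_le.2 hab
        linarith)
      ⟨0, measure_ne_top μ _⟩
    rwa [hinter, measure_empty] at h
  obtain ⟨N, hN⟩ := (htendz.eventually_lt_const (ENNReal.ofReal_pos.2 hβpos)).exists
  have hbdd : BddBelow {x' : ℝ | β ≤ (μ {ω | Y 0 ω ≤ x'}).toReal} := by
    refine ⟨-(N:ℝ), fun x' hx'mem => ?_⟩
    by_contra hcon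
    push_neg at hcon
    have hsub : {ω | Y 0 ω ≤ x'} ⊆ {ω | Y 0 ω ≤ -(N:ℝ)} := fun ω hω =>
      le_trans hω (le_of_lt hcon)
    have h2 := ENNReal.toReal_lt_of_lt_ofReal (lt_of_le_of_lt (measure_mono hsub) hN)
    simp only [Set.mem_setOf_eq] at hx'mem
    linarith
  have hkey : ∀ z : ℝ, z < Gβ → μ {ω | Y 0 ω ≤ z} ≤ ENNReal.ofReal β := by
    intro z hz
    by_contra hcon
    push_neg at hcon
    have hβle : β ≤ (μ {ω | Y 0 ω ≤ z}).toReal :=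
      le_of_lt ((ENNReal.ofReal_lt_iff_lt_toReal hβpos.le (measure_ne_top μ _)).1 hcon)
    have : Gβ ≤ z := hGβ ▸ csInf_le hbdd hβle
    linarith
  have hunion : {ω | Y 0 ω < Gβ} = ⋃ n : ℕ, {ω | Y 0 ω ≤ Gβ - 1/((n:ℝ)+1)} := by
    ext ω
    simp only [Set.mem_setOf_eq, Set.mem_iUnion]
    constructor
    · intro h
      obtain ⟨n, hn⟩ := exists_nat_one_div_lt (by linarith : (0:ℝ) < Gβ - Y 0 ω)
      exact ⟨n, by linarith⟩
    · rintro ⟨n, hn⟩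
      have : (0:ℝ) < 1/((n:ℝ)+1) := by positivity
      linarith
  have hmono : Monotone (fun n : ℕ => {ω | Y 0 ω ≤ Gβ - 1/((n:ℝ)+1)}) := by
    intro a b hab ω hω
    simp only [Set.mem_setOf_eq] at hω ⊢
    have h1 : ((a:ℝ)+1) ≤ ((b:ℝ)+1) := by
      have : (a:ℝ) ≤ b := Nat.cast_le.2 hab
      linarith
    have := one_div_le_one_div_of_le (by positivity : (0:ℝ) < (a:ℝ)+1) h1
    linarith
  have hqle : μ {ω | Y 0 ω < Gβ} ≤ ENNReal.ofReal β := by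
    rw [hunion, hmono.measure_iUnion]
    refine iSup_le fun n => hkey _ ?_
    have : (0:ℝ) < 1/((n:ℝ)+1) := by positivity
    linarith
  have hqβ : q ≤ β := ENNReal.toReal_le_of_le_ofReal hβpos.le hqle
  have hq0 : 0 ≤ q := ENNReal.toReal_nonneg
  -- the tilting parameter
  set lam : ℝ := Real.log (x*(1-β)/(β*(1-x))) with hlam
  have hratpos : 0 < x*(1-β)/(β*(1-x)) := by positivity
  have hrat1 : 1 < x*(1-β)/(β*(1-x)) := by
    rw [lt_div_iff₀ (by positivity)]
    have h1 : β*(1-x) < x*(1-β) := by nlinarith only [hβltx]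
    linarith only [h1]
  have hlam0 : 0 < lam := Real.log_pos hrat1
  have hexplam : Real.exp lam = x*(1-β)/(β*(1-x)) := Real.exp_log hratpos
  have hexplam1 : 1 ≤ Real.exp lam := by
    rw [← Real.exp_zero]
    exact Real.exp_le_exp.2 hlam0.le
  -- mgf computations
  have hSi_meas : ∀ i : Fin t, MeasurableSet {ω | Y (i:ℕ) ω < Gβ} := fun i =>
    measurableSet_lt (hmeas i i.isLt) measurable_const
  have hrepr : ∀ i : Fin t, (fun ω => Real.exp (lam * Xb i ω))
      = fun ω => Set.indicator {ω | Y (i:ℕ) ω < Gβ} (fun _ => Real.exp lam - 1) ω + 1 := by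
    intro i
    funext ω
    by_cases h : Y (i:ℕ) ω < Gβ
    · have hmem : ω ∈ {ω | Y (i:ℕ) ω < Gβ} := h
      simp [hXb, Function.comp, h, Set.indicator_of_mem hmem]
    · have hmem : ω ∉ {ω | Y (i:ℕ) ω < Gβ} := h
      simp [hXb, Function.comp, h, Set.indicator_of_notMem hmem]
  have hint_i : ∀ i : Fin t, Integrable (fun ω => Real.exp (lam * Xb i ω)) μ := by
    intro i
    rw [hrepr i]
    exact ((integrable_const _).indicator (hSi_meas i)).add (integrable_const 1)
  have hmgf_i : ∀ i : Fin t, mgf (Xb i) μ lam = 1 + q * (Real.exp lam - 1) := by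
    intro i
    have h0 : mgf (Xb i) μ lam = ∫ ω, Real.exp (lam * Xb i ω) ∂μ := rfl
    rw [h0, hrepr i,
      integral_add ((integrable_const _).indicator (hSi_meas i)) (integrable_const 1),
      integral_indicator_const _ (hSi_meas i), integral_const, measureReal_def, hqi i]
    rw [← hqdef]
    simp [smul_eq_mul, measure_univ]
    ring
  set Z : Ω → ℝ := ∑ i : Fin t, Xb i with hZ
  have hmgfZ : mgf Z μ lam = (1 + q*(Real.exp lam - 1))^t := by
    rw [hZ, hXindep.mgf_sum hXmeas Finset.univ]
    simp only [hmgf_i, Finset.prod_const, Finset.card_univ, Fintype.card_fin]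
  have hintZ : Integrable (fun ω => Real.exp (lam * Z ω)) μ := by
    rw [hZ]
    exact hXindep.integrable_exp_mul_sum hXmeas (fun i _ => hint_i i)
  -- Chernoff bound
  have hexplam1' : (0:ℝ) ≤ Real.exp lam - 1 := by linarith only [hexplam1]
  have hbase0 : (0:ℝ) < 1 + q*(Real.exp lam - 1) := by
    have := mul_nonneg hq0 hexplam1'
    linarith only [this]
  have hbase_le : 1 + q*(Real.exp lam - 1) ≤ (1-β)/(1-x) := by
    have heq2 : 1 + β*(Real.exp lam - 1) = (1-β)/(1-x) := by
      rw [hexplam]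
      field_simp
      ring
    have hmul := mul_le_mul_of_nonneg_right hqβ hexplam1'
    linarith only [hmul, heq2]
  have hy2pos : (0:ℝ) < (1-β)/(1-x) := by positivity
  have hcher := measure_ge_le_exp_mul_mgf (μ := μ) (X := Z) (x * t) hlam0.le hintZ
  have hchain : (μ {ω | x * t ≤ Z ω}).toReal ≤ δ := by
    have h2 : mgf Z μ lam ≤ ((1-β)/(1-x))^t := by
      rw [hmgfZ]
      exact pow_le_pow_left₀ hbase0.le hbase_le t
    have h3 : (μ {ω | x*t ≤ Z ω}).toReal ≤ Real.exp (-lam * (x*t)) * ((1-β)/(1-x))^t :=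
      le_trans hcher (mul_le_mul_of_nonneg_left h2 (Real.exp_nonneg _))
    have h4 : Real.exp (-lam*(x*t)) * ((1-β)/(1-x))^t
        = Real.exp (-lam*(x*t) + t * Real.log ((1-β)/(1-x))) := by
      rw [Real.exp_add, Real.exp_nat_mul, Real.exp_log hy2pos]
    have hlamsplit : lam = Real.log (x/β) + Real.log ((1-β)/(1-x)) := by
      rw [hlam, show x*(1-β)/(β*(1-x)) = (x/β) * ((1-β)/(1-x)) by rw [div_mul_div_comm],
        Real.log_mul (by positivity) (by positivity)]
    have hexpo : -lam*(x*t) + t * Real.log ((1-β)/(1-x)) ≤ Real.log δ := by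
      have hLd : Real.log δ = -L := by rw [hLdef, one_div, Real.log_inv]; ring
      rw [hLd]
      have hKL' : r ≤ x*lam - Real.log ((1-β)/(1-x)) := by
        rw [hlamsplit]
        have hexpand : x*(Real.log (x/β) + Real.log ((1-β)/(1-x))) - Real.log ((1-β)/(1-x))
            = x*Real.log (x/β) - (1-x)*Real.log ((1-β)/(1-x)) := by ring
        rw [hexpand]
        exact hKL
      have hLr : L ≤ (t:ℝ) * (x*lam - Real.log ((1-β)/(1-x))) := by
        have h5 : L = (t:ℝ) * r := by rw [hrdef]; field_simp
        rw [h5]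
        exact mul_le_mul_of_nonneg_left hKL' ht0.le
      have hexpand2 : (t:ℝ) * (x*lam - Real.log ((1-β)/(1-x)))
          = lam*(x*t) - t * Real.log ((1-β)/(1-x)) := by ring
      rw [hexpand2] at hLr
      linarith only [hLr]
    calc (μ {ω | x*t ≤ Z ω}).toReal
        ≤ Real.exp (-lam * (x*t)) * ((1-β)/(1-x))^t := h3
      _ = Real.exp (-lam*(x*t) + t * Real.log ((1-β)/(1-x))) := h4
      _ ≤ Real.exp (Real.log δ) := Real.exp_le_exp.2 hexpo
      _ = δ := Real.exp_log hδ0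
  have hEbound : μ {ω | x * t ≤ Z ω} ≤ ENNReal.ofReal δ := by
    rw [← ENNReal.ofReal_toReal (measure_ne_top μ {ω | x * t ≤ Z ω})]
    exact ENNReal.ofReal_le_ofReal hchain
  -- event inclusion
  have hsubset : ∀ ω, ¬ (Gβ ≤ empQuantile t (fun s => Y s ω) x) → x * t ≤ Z ω := by
    intro ω hω
    rw [not_le] at hω
    have hTne : Set.Nonempty {x' : ℝ |
        x * t ≤ (((Finset.range t).filter fun s => Y s ω ≤ x').card : ℝ)} := by
      have hrange : (Finset.range t).Nonempty := ⟨0, Finset.mem_range.2 (by omega)⟩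
      refine ⟨((Finset.range t).image (fun s => Y s ω)).max' (hrange.image _), ?_⟩
      have hfil : (Finset.range t).filter
          (fun s => Y s ω ≤ ((Finset.range t).image (fun s => Y s ω)).max' (hrange.image _))
          = Finset.range t := by
        apply Finset.filter_true_of_mem
        intro j hj
        exact Finset.le_max' _ (Y j ω) (Finset.mem_image_of_mem (fun s => Y s ω) hj)
      simp only [Set.mem_setOf_eq, hfil, Finset.card_range]
      calc x * t ≤ 1*t := mul_le_mul_of_nonneg_right hx1.le ht0.le
        _ = t := one_mul _
    simp only [empQuantile] at hω
    obtain ⟨z, hzT, hzlt⟩ := exists_lt_of_csInf_lt hTne hω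
    simp only [Set.mem_setOf_eq] at hzT
    have hcard : ((Finset.range t).filter (fun s => Y s ω ≤ z)).card
        ≤ ((Finset.range t).filter (fun s => Y s ω < Gβ)).card := by
      apply Finset.card_le_card
      intro s hs
      rw [Finset.mem_filter] at hs ⊢
      exact ⟨hs.1, lt_of_le_of_lt hs.2 hzlt⟩
    have hZω : Z ω = ∑ s ∈ Finset.range t, (if Y s ω < Gβ then (1:ℝ) else 0) := by
      rw [hZ, Finset.sum_apply,
        ← Fin.sum_univ_eq_sum_range (fun s => if Y s ω < Gβ then (1:ℝ) else 0) t]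
      rfl
    have hcardZ : (((Finset.range t).filter (fun s => Y s ω < Gβ)).card : ℝ) = Z ω := by
      rw [hZω, Finset.card_filter]
      simp only [Nat.cast_sum, Nat.cast_ite, Nat.cast_one, Nat.cast_zero]
    rw [← hcardZ]
    calc x * t ≤ (((Finset.range t).filter (fun s => Y s ω ≤ z)).card : ℝ) := hzT
      _ ≤ _ := by exact_mod_cast hcard
  -- conclusion
  have hcover : (1:ENNReal) ≤ μ {ω | Gβ ≤ empQuantile t (fun s => Y s ω) x}
      + ENNReal.ofReal δ := by
    have h2 : Set.univ ⊆ {ω | Gβ ≤ empQuantile t (fun s => Y s ω) x} ∪ {ω | x*t ≤ Z ω} := by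
      intro ω _
      by_cases h : Gβ ≤ empQuantile t (fun s => Y s ω) x
      · exact Or.inl h
      · exact Or.inr (hsubset ω h)
    calc (1:ENNReal) = μ Set.univ := measure_univ.symm
      _ ≤ μ ({ω | Gβ ≤ empQuantile t (fun s => Y s ω) x} ∪ {ω | x*t ≤ Z ω}) := measure_mono h2
      _ ≤ μ {ω | Gβ ≤ empQuantile t (fun s => Y s ω) x} + μ {ω | x*t ≤ Z ω} :=
          measure_union_le _ _
      _ ≤ _ := add_le_add_right hEbound _
  have hofreal : ENNReal.ofReal (1-δ) + ENNReal.ofReal δ = 1 := by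
    rw [← ENNReal.ofReal_add (by linarith) hδ0.le]
    norm_num
  rw [← hofreal] at hcover
  exact (ENNReal.add_le_add_iff_right ENNReal.ofReal_ne_top).1 hcover
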